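/- Let r be a probability mass function on S_A × S_B (a joint distribution of random variables a and b) with marginals r₁ on S_A and r₂ on S_B, and suppose SD(r, r₁ ⊗ r₂) ≤ ε. Let ρ be a pmf on a countable set R, sampled independently of (a, b), and let f : S_B × R → C be a function (a randomized function of b with random tape drawn from ρ). Define a new joint pmf r' on S_B × S_A by: sample (b, rnd) from r₂ ⊗ ρ, compute c = f(b, rnd), and sample a' from the conditional distribution of the a-component of r given the event that f applied to the b-component (with an independent tape from ρ) equals c; output (b, a'). Then SD(r', r₂ ⊗ r₁) ≤ ε. -/

import Mathlib

/-- Statistical distance between two (real-valued) mass functions. -/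
noncomputable def SD {S : Type*} (p q : S → ℝ) : ℝ := (1 / 2) * ∑' s, |p s - q s|

/-- `p` is a probability mass function: pointwise nonnegative and summing to 1. -/
def IsPMF {S : Type*} (p : S → ℝ) : Prop := (∀ s, 0 ≤ p s) ∧ HasSum p 1

section aux

variable {SA SB R C : Type*} (r : SA × SB → ℝ) (ρ : R → ℝ) (f : SB × R → C)

noncomputable def mA (a : SA) : ℝ := ∑' b, r (a, b)
noncomputable def mB (b : SB) : ℝ := ∑' a, r (a, b)
noncomputable def Nf (a : SA) (c : C) : ℝ :=
  ∑' p : SB × R, {p' : SB × R | f p' = c}.indicator (fun p' => r (a, p'.1) * ρ p'.2) p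
noncomputable def Df (c : C) : ℝ :=
  ∑' q : (SA × SB) × R, {q' : (SA × SB) × R | f (q'.1.2, q'.2) = c}.indicator
    (fun q' => r q'.1 * ρ q'.2) q

variable {r ρ}

lemma mA_nonneg (hr : IsPMF r) (a : SA) : 0 ≤ mA r a := tsum_nonneg fun _ => hr.1 _
lemma mB_nonneg (hr : IsPMF r) (b : SB) : 0 ≤ mB r b := tsum_nonneg fun _ => hr.1 _

lemma summable_mA (hr : IsPMF r) : Summable (mA r) := hr.2.summable.prod

lemma tsum_mA (hr : IsPMF r) : ∑' a, mA r a = 1 :=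
  (Summable.tsum_prod hr.2.summable).symm.trans hr.2.tsum_eq

lemma summable_swap (hr : IsPMF r) : Summable (fun p : SB × SA => r (p.2, p.1)) :=
  (Equiv.prodComm SB SA).summable_iff.mpr hr.2.summable

lemma summable_mB (hr : IsPMF r) : Summable (mB r) := (summable_swap hr).prod

lemma tsum_mB (hr : IsPMF r) : ∑' b, mB r b = 1 :=
  (Summable.tsum_prod (summable_swap hr)).symm.trans
    (((Equiv.prodComm SB SA).tsum_eq r).trans hr.2.tsum_eq)

lemma summable_row (hr : IsPMF r) (a : SA) : Summable (fun b => r (a, b)) :=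
  hr.2.summable.prod_factor a

lemma summable_rρ (hr : IsPMF r) (hρ : IsPMF ρ) :
    Summable (fun q : (SA × SB) × R => r q.1 * ρ q.2) :=
  hr.2.summable.mul_of_nonneg hρ.2.summable (fun i => hr.1 i) (fun i => hρ.1 i)

lemma summable_rowρ (hr : IsPMF r) (hρ : IsPMF ρ) (a : SA) :
    Summable (fun p : SB × R => r (a, p.1) * ρ p.2) :=
  (summable_row hr a).mul_of_nonneg hρ.2.summable (fun i => hr.1 _) (fun i => hρ.1 i)

lemma summable_mBρ (hr : IsPMF r) (hρ : IsPMF ρ) :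
    Summable (fun p : SB × R => mB r p.1 * ρ p.2) :=
  (summable_mB hr).mul_of_nonneg hρ.2.summable (fun i => mB_nonneg hr i) (fun i => hρ.1 i)

end aux

section dflem

variable {SA SB R C : Type*} {r : SA × SB → ℝ} {ρ : R → ℝ} (f : SB × R → C)

noncomputable def Gaux (r : SA × SB → ℝ) (ρ : R → ℝ) (c : C) : SA × (SB × R) → ℝ :=
  {x : SA × (SB × R) | f x.2 = c}.indicator (fun x => r (x.1, x.2.1) * ρ x.2.2)

lemma summable_Gaux (hr : IsPMF r) (hρ : IsPMF ρ) (c : C) : Summable (Gaux f r ρ c) := by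
  have h : Summable ((fun x : SA × (SB × R) => r (x.1, x.2.1) * ρ x.2.2) ∘
      (Equiv.prodAssoc SA SB R)) := (summable_rρ hr hρ).congr fun q => rfl
  exact ((Equiv.prodAssoc SA SB R).summable_iff.mp h).indicator _

lemma Df_eq_tsum_Gaux (hr : IsPMF r) (hρ : IsPMF ρ) (c : C) :
    Df r ρ f c = ∑' x : SA × (SB × R), Gaux f r ρ c x := by
  rw [Df, ← (Equiv.prodAssoc SA SB R).tsum_eq (Gaux f r ρ c)]
  refine tsum_congr fun q => ?_
  by_cases hc : f (q.1.2, q.2) = c <;>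
    simp [Gaux, Set.indicator_apply, Equiv.prodAssoc, hc]

lemma Df_eq_sum_Nf (hr : IsPMF r) (hρ : IsPMF ρ) (c : C) :
    Df r ρ f c = ∑' a, Nf r ρ f a c := by
  rw [Df_eq_tsum_Gaux f hr hρ c, Summable.tsum_prod (summable_Gaux f hr hρ c)]
  refine tsum_congr fun a => tsum_congr fun p => ?_
  by_cases hc : f p = c <;> simp [Gaux, Nf, Set.indicator_apply, hc]

lemma Df_eq_w (hr : IsPMF r) (hρ : IsPMF ρ) (c : C) :
    Df r ρ f c = ∑' p : SB × R,
      {p' : SB × R | f p' = c}.indicator (fun p' => mB r p'.1 * ρ p'.2) p := by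
  rw [Df_eq_tsum_Gaux f hr hρ c, Summable.tsum_prod (summable_Gaux f hr hρ c),
    ← Summable.tsum_comm (f := fun (a : SA) (p : SB × R) => Gaux f r ρ c (a, p))
      ((summable_Gaux f hr hρ c).congr fun x => rfl)]
  refine tsum_congr fun p => ?_
  by_cases hc : f p = c
  · have h1 : ∀ a : SA, Gaux f r ρ c (a, p) = r (a, p.1) * ρ p.2 := fun a => by
      simp [Gaux, Set.indicator_apply, hc]
    have h2 : ({p' : SB × R | f p' = c}).indicator (fun p' => mB r p'.1 * ρ p'.2) p
        = mB r p.1 * ρ p.2 := by simp [Set.indicator_apply, hc]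
    rw [h2, tsum_congr h1]
    exact tsum_mul_right
  · have h1 : ∀ a : SA, Gaux f r ρ c (a, p) = 0 := fun a => by
      simp [Gaux, Set.indicator_apply, hc]
    rw [tsum_congr h1, tsum_zero]
    simp [Set.indicator_apply, hc]

lemma Nf_nonneg (hr : IsPMF r) (hρ : IsPMF ρ) (a : SA) (c : C) : 0 ≤ Nf r ρ f a c :=
  tsum_nonneg fun p => Set.indicator_nonneg (fun p' _ => mul_nonneg (hr.1 _) (hρ.1 _)) p

lemma Df_nonneg (hr : IsPMF r) (hρ : IsPMF ρ) (c : C) : 0 ≤ Df r ρ f c :=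
  tsum_nonneg fun q => Set.indicator_nonneg (fun q' _ => mul_nonneg (hr.1 _) (hρ.1 _)) q

lemma summable_Nf (hr : IsPMF r) (hρ : IsPMF ρ) (c : C) :
    Summable (fun a => Nf r ρ f a c) := by
  have := (summable_Gaux f hr hρ c).prod
  refine this.congr fun a => ?_
  refine tsum_congr fun p => ?_
  by_cases hc : f p = c <;> simp [Gaux, Nf, Set.indicator_apply, hc]

lemma Nf_le_Df (hr : IsPMF r) (hρ : IsPMF ρ) (a : SA) (c : C) :
    Nf r ρ f a c ≤ Df r ρ f c := by
  rw [Df_eq_sum_Nf f hr hρ c]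
  exact Summable.le_tsum (summable_Nf f hr hρ c) a fun a' _ => Nf_nonneg f hr hρ a' c

lemma mBρ_eq_zero (hr : IsPMF r) (hρ : IsPMF ρ) (b : SB) (rnd : R)
    (hD : Df r ρ f (f (b, rnd)) = 0) : mB r b * ρ rnd = 0 := by
  have hle : mB r b * ρ rnd ≤ Df r ρ f (f (b, rnd)) := by
    rw [Df_eq_w f hr hρ]
    have := Summable.le_tsum ((summable_mBρ hr hρ).indicator
      {p' : SB × R | f p' = f (b, rnd)}) (b, rnd)
      (fun p _ => Set.indicator_nonneg
        (fun p' _ => mul_nonneg (mB_nonneg hr _) (hρ.1 _)) p)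
    simpa [Set.indicator_apply] using this
  exact le_antisymm (hD ▸ hle) (mul_nonneg (mB_nonneg hr b) (hρ.1 rnd))

end dflem

section ennreal_side

variable {SA SB R C : Type*} {r : SA × SB → ℝ} {ρ : R → ℝ} (f : SB × R → C)

lemma abs_tsum_le {ι : Type*} {g : ι → ℝ} (h : Summable fun i => |g i|) :
    |∑' i, g i| ≤ ∑' i, |g i| := by
  have h' : Summable fun i => ‖g i‖ := by simpa [Real.norm_eq_abs] using h
  have h2 := norm_tsum_le_tsum_norm (f := g) h'
  simpa [Real.norm_eq_abs] using h2

lemma NDdiv_mem (hr : IsPMF r) (hρ : IsPMF ρ) (a : SA) (c : C) :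
    0 ≤ Nf r ρ f a c / Df r ρ f c ∧ Nf r ρ f a c / Df r ρ f c ≤ 1 := by
  constructor
  · exact div_nonneg (Nf_nonneg f hr hρ a c) (Df_nonneg f hr hρ c)
  · rcases (Df_nonneg f hr hρ c).eq_or_lt with hD | hD
    · rw [← hD]; simp
    · exact (div_le_one hD).mpr (Nf_le_Df f hr hρ a c)

/-- Step S1: pointwise bound on `|X - Y|`. -/
lemma step1 (hr : IsPMF r) (hρ : IsPMF ρ) (b : SB) (a : SA) :
    |(∑' rnd, mB r b * ρ rnd *
        (Nf r ρ f a (f (b, rnd)) / Df r ρ f (f (b, rnd)))) - mB r b * mA r a| ≤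
      ∑' rnd, mB r b * ρ rnd * |Nf r ρ f a (f (b, rnd)) / Df r ρ f (f (b, rnd)) - mA r a| := by
  set q : R → ℝ := fun rnd => Nf r ρ f a (f (b, rnd)) / Df r ρ f (f (b, rnd)) with hq
  have hq0 : ∀ rnd, 0 ≤ q rnd := fun rnd => (NDdiv_mem f hr hρ a _).1
  have hq1 : ∀ rnd, q rnd ≤ 1 := fun rnd => (NDdiv_mem f hr hρ a _).2
  have hbρ : Summable (fun rnd => mB r b * ρ rnd) := hρ.2.summable.mul_left _
  have hg1 : Summable (fun rnd => mB r b * ρ rnd * q rnd) := by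
    refine Summable.of_nonneg_of_le (fun rnd => ?_) (fun rnd => ?_) hbρ
    · exact mul_nonneg (mul_nonneg (mB_nonneg hr b) (hρ.1 rnd)) (hq0 rnd)
    · exact mul_le_of_le_one_right (mul_nonneg (mB_nonneg hr b) (hρ.1 rnd)) (hq1 rnd)
  have hg2 : Summable (fun rnd => mB r b * ρ rnd * mA r a) :=
    (hρ.2.summable.mul_left (mB r b)).mul_right (mA r a)
  have hY : mB r b * mA r a = ∑' rnd, mB r b * ρ rnd * mA r a := by
    rw [tsum_mul_right, tsum_mul_left, hρ.2.tsum_eq, mul_one]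
  rw [hY, ← Summable.tsum_sub hg1 hg2]
  have habs : ∀ rnd, |mB r b * ρ rnd * q rnd - mB r b * ρ rnd * mA r a| =
      mB r b * ρ rnd * |q rnd - mA r a| := by
    intro rnd
    rw [← mul_sub, abs_mul, abs_of_nonneg (mul_nonneg (mB_nonneg hr b) (hρ.1 rnd))]
  calc |∑' rnd, (mB r b * ρ rnd * q rnd - mB r b * ρ rnd * mA r a)|
      ≤ ∑' rnd, |mB r b * ρ rnd * q rnd - mB r b * ρ rnd * mA r a| :=
        abs_tsum_le (by
          refine ((hg1.sub hg2).abs))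
    _ = ∑' rnd, mB r b * ρ rnd * |q rnd - mA r a| := tsum_congr habs

end ennreal_side

section ennreal_side2

open ENNReal

variable {SA SB R C : Type*} {r : SA × SB → ℝ} {ρ : R → ℝ} (f : SB × R → C)

noncomputable def Te (r : SA × SB → ℝ) (ρ : R → ℝ) (f : SB × R → C) (c : C) : ℝ≥0∞ :=
  ∑' a, ENNReal.ofReal |Nf r ρ f a c - mA r a * Df r ρ f c|

/-- Step S2. -/
lemma step2 (hr : IsPMF r) (hρ : IsPMF ρ) (b : SB) (rnd : R) :
    ∑' a : SA, ENNReal.ofReal (mB r b * ρ rnd *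
        |Nf r ρ f a (f (b, rnd)) / Df r ρ f (f (b, rnd)) - mA r a|) ≤
      (ENNReal.ofReal (mB r b * ρ rnd) / ENNReal.ofReal (Df r ρ f (f (b, rnd)))) *
        Te r ρ f (f (b, rnd)) := by
  set c := f (b, rnd) with hc
  rcases (Df_nonneg f hr hρ c).eq_or_lt with hD | hD
  · have h0 : mB r b * ρ rnd = 0 := mBρ_eq_zero f hr hρ b rnd hD.symm
    have : ∀ a : SA, ENNReal.ofReal (mB r b * ρ rnd *
        |Nf r ρ f a c / Df r ρ f c - mA r a|) = 0 := by
      intro a; rw [h0, zero_mul, ENNReal.ofReal_zero]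
    rw [tsum_congr this, tsum_zero]
    exact bot_le
  · have key : ∀ a : SA, ENNReal.ofReal (mB r b * ρ rnd *
        |Nf r ρ f a c / Df r ρ f c - mA r a|) =
        (ENNReal.ofReal (mB r b * ρ rnd) / ENNReal.ofReal (Df r ρ f c)) *
          ENNReal.ofReal |Nf r ρ f a c - mA r a * Df r ρ f c| := by
      intro a
      have hD' : Df r ρ f c ≠ 0 := ne_of_gt hD
      have h1 : Nf r ρ f a c / Df r ρ f c - mA r a =
          (Nf r ρ f a c - mA r a * Df r ρ f c) / Df r ρ f c := by
        field_simp
      rw [ENNReal.ofReal_mul (mul_nonneg (mB_nonneg hr b) (hρ.1 rnd)), h1, abs_div,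
        abs_of_pos hD, ENNReal.ofReal_div_of_pos hD, div_eq_mul_inv,
        div_eq_mul_inv]
      ring
    rw [tsum_congr key, ENNReal.tsum_mul_left]
    exact le_rfl

end ennreal_side2

section ennreal_side3

open ENNReal

variable {SA SB R C : Type*} {r : SA × SB → ℝ} {ρ : R → ℝ} (f : SB × R → C)

lemma ofReal_indicator {ι : Type*} (s : Set ι) (g : ι → ℝ) (x : ι) :
    ENNReal.ofReal (s.indicator g x) = s.indicator (fun y => ENNReal.ofReal (g y)) x := by
  by_cases hx : x ∈ s <;> simp [Set.indicator_apply, hx]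

lemma preimage_eq_setOf (c : C) : f ⁻¹' {c} = {p' : SB × R | f p' = c} := by
  ext p; simp

/-- ENNReal version of the fiber mass identity: the fiber sum of `mB ⊗ ρ` equals `Df`. -/
lemma fiber_mass (hr : IsPMF r) (hρ : IsPMF ρ) (c : C) :
    ∑' p : (f ⁻¹' {c}), ENNReal.ofReal (mB r (p : SB × R).1 * ρ (p : SB × R).2) =
      ENNReal.ofReal (Df r ρ f c) := by
  rw [tsum_subtype (f ⁻¹' {c}) (fun p => ENNReal.ofReal (mB r p.1 * ρ p.2)),
    Df_eq_w f hr hρ c,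
    ENNReal.ofReal_tsum_of_nonneg
      (fun p => Set.indicator_nonneg (fun p' _ => mul_nonneg (mB_nonneg hr _) (hρ.1 _)) p)
      (((summable_mBρ hr hρ)).indicator _)]
  refine tsum_congr fun p => ?_
  rw [ofReal_indicator, preimage_eq_setOf]

/-- Step S3: collapse the fiberwise sum. -/
lemma step3 (hr : IsPMF r) (hρ : IsPMF ρ) :
    ∑' p : SB × R, (ENNReal.ofReal (mB r p.1 * ρ p.2) /
        ENNReal.ofReal (Df r ρ f (f p))) * Te r ρ f (f p) ≤
      ∑' c : C, Te r ρ f c := by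
  rw [← ENNReal.tsum_fiberwise (fun p : SB × R =>
    (ENNReal.ofReal (mB r p.1 * ρ p.2) / ENNReal.ofReal (Df r ρ f (f p))) * Te r ρ f (f p)) f]
  refine ENNReal.tsum_le_tsum fun c => ?_
  have hfib : ∀ p : (f ⁻¹' {c}),
      (ENNReal.ofReal (mB r (p : SB × R).1 * ρ (p : SB × R).2) /
        ENNReal.ofReal (Df r ρ f (f (p : SB × R)))) * Te r ρ f (f (p : SB × R)) =
      (Te r ρ f c / ENNReal.ofReal (Df r ρ f c)) *
        ENNReal.ofReal (mB r (p : SB × R).1 * ρ (p : SB × R).2) := by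
    rintro ⟨p, hp⟩
    have : f p = c := hp
    rw [this, div_eq_mul_inv, div_eq_mul_inv]
    ring
  rw [tsum_congr hfib, ENNReal.tsum_mul_left, fiber_mass f hr hρ c]
  rcases eq_or_ne (ENNReal.ofReal (Df r ρ f c)) 0 with h0 | h0
  · rw [h0, mul_zero]; exact bot_le
  · rw [ENNReal.div_mul_cancel h0 ENNReal.ofReal_ne_top]

end ennreal_side3

section ennreal_side4

open ENNReal

variable {SA SB R C : Type*} {r : SA × SB → ℝ} {ρ : R → ℝ} (f : SB × R → C)

lemma diff_identity (hr : IsPMF r) (hρ : IsPMF ρ) (a : SA) (c : C) :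
    Nf r ρ f a c - mA r a * Df r ρ f c =
      ∑' p : SB × R, ({p' : SB × R | f p' = c}).indicator
        (fun p => ρ p.2 * (r (a, p.1) - mA r a * mB r p.1)) p := by
  have h1 : Summable ({p' : SB × R | f p' = c}.indicator
      (fun p => r (a, p.1) * ρ p.2)) := (summable_rowρ hr hρ a).indicator _
  have h2 : Summable (fun p : SB × R => mA r a *
      ({p' : SB × R | f p' = c}.indicator (fun p' => mB r p'.1 * ρ p'.2) p)) :=
    ((summable_mBρ hr hρ).indicator _).mul_left (mA r a)
  rw [Nf, Df_eq_w f hr hρ c, ← tsum_mul_left, ← Summable.tsum_sub h1 h2]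
  refine tsum_congr fun p => ?_
  by_cases hc : f p = c <;> simp [Set.indicator_apply, hc] <;> ring

lemma summable_absdiff (hr : IsPMF r) (hρ : IsPMF ρ) (a : SA) (c : C) :
    Summable (fun p : SB × R => ({p' : SB × R | f p' = c}).indicator
      (fun p => ρ p.2 * |r (a, p.1) - mA r a * mB r p.1|) p) := by
  have s1 : Summable (fun p : SB × R => ρ p.2 * r (a, p.1)) :=
    (summable_rowρ hr hρ a).congr fun p => by ring
  have s2 : Summable (fun p : SB × R => ρ p.2 * (mA r a * mB r p.1)) :=
    ((summable_mBρ hr hρ).mul_left (mA r a)).congr fun p => by ring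
  have sb : Summable (fun p : SB × R => ρ p.2 * (r (a, p.1) + mA r a * mB r p.1)) :=
    (s1.add s2).congr fun p => by ring
  refine Summable.of_nonneg_of_le (fun p => ?_) (fun p => ?_) sb
  · exact Set.indicator_nonneg
      (fun p' _ => mul_nonneg (hρ.1 _) (abs_nonneg _)) p
  · by_cases hc : p ∈ {p' : SB × R | f p' = c}
    · rw [Set.indicator_of_mem hc]
      refine mul_le_mul_of_nonneg_left ?_ (hρ.1 _)
      exact (abs_sub _ _).trans (by
        rw [abs_of_nonneg (hr.1 _),
          abs_of_nonneg (mul_nonneg (mA_nonneg hr a) (mB_nonneg hr _))])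
    · rw [Set.indicator_of_notMem hc]
      exact mul_nonneg (hρ.1 _)
        (add_nonneg (hr.1 _) (mul_nonneg (mA_nonneg hr a) (mB_nonneg hr _)))

/-- Step S4. -/
lemma step4 (hr : IsPMF r) (hρ : IsPMF ρ) (c : C) :
    Te r ρ f c ≤ ∑' a : SA, ∑' p : SB × R, ({p' : SB × R | f p' = c}).indicator
      (fun p => ENNReal.ofReal (ρ p.2 * |r (a, p.1) - mA r a * mB r p.1|)) p := by
  refine ENNReal.tsum_le_tsum fun a => ?_
  have habs : ∀ p : SB × R, |({p' : SB × R | f p' = c}).indicator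
      (fun p => ρ p.2 * (r (a, p.1) - mA r a * mB r p.1)) p| =
      ({p' : SB × R | f p' = c}).indicator
        (fun p => ρ p.2 * |r (a, p.1) - mA r a * mB r p.1|) p := by
    intro p
    by_cases hc : f p = c <;>
      simp [Set.indicator_apply, hc, abs_mul, abs_of_nonneg (hρ.1 _)]
  have hle : |Nf r ρ f a c - mA r a * Df r ρ f c| ≤
      ∑' p : SB × R, ({p' : SB × R | f p' = c}).indicator
        (fun p => ρ p.2 * |r (a, p.1) - mA r a * mB r p.1|) p := by
    rw [diff_identity f hr hρ a c]
    refine (abs_tsum_le ?_).trans_eq (tsum_congr habs)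
    exact (summable_absdiff f hr hρ a c).congr fun p => (habs p).symm
  refine (ENNReal.ofReal_le_ofReal hle).trans_eq ?_
  rw [ENNReal.ofReal_tsum_of_nonneg
    (fun p => Set.indicator_nonneg (fun p' _ => mul_nonneg (hρ.1 _) (abs_nonneg _)) p)
    (summable_absdiff f hr hρ a c)]
  exact tsum_congr fun p => ofReal_indicator _ _ p

/-- Steps S5 and S6. -/
lemma step56 (hr : IsPMF r) (hρ : IsPMF ρ) :
    ∑' (c : C) (a : SA), ∑' p : SB × R, ({p' : SB × R | f p' = c}).indicator
        (fun p => ENNReal.ofReal (ρ p.2 * |r (a, p.1) - mA r a * mB r p.1|)) p =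
      ∑' q : SA × SB, ENNReal.ofReal |r q - mA r q.1 * mB r q.2| := by
  rw [ENNReal.tsum_comm]
  have hinner : ∀ a : SA, ∑' (c : C), ∑' p : SB × R,
      ({p' : SB × R | f p' = c}).indicator
        (fun p => ENNReal.ofReal (ρ p.2 * |r (a, p.1) - mA r a * mB r p.1|)) p =
      ∑' p : SB × R, ENNReal.ofReal (ρ p.2 * |r (a, p.1) - mA r a * mB r p.1|) := by
    intro a
    rw [← ENNReal.tsum_fiberwise
      (fun p : SB × R => ENNReal.ofReal (ρ p.2 * |r (a, p.1) - mA r a * mB r p.1|)) f]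
    refine tsum_congr fun c => ?_
    rw [tsum_subtype (f ⁻¹' {c})
      (fun p : SB × R => ENNReal.ofReal (ρ p.2 * |r (a, p.1) - mA r a * mB r p.1|)),
      preimage_eq_setOf]
  rw [tsum_congr hinner]
  have hper : ∀ a : SA, ∑' p : SB × R,
      ENNReal.ofReal (ρ p.2 * |r (a, p.1) - mA r a * mB r p.1|) =
      ∑' b : SB, ENNReal.ofReal |r (a, b) - mA r a * mB r b| := by
    intro a
    rw [ENNReal.tsum_prod']
    refine tsum_congr fun b => ?_
    have : ∀ rnd : R, ENNReal.ofReal (ρ rnd * |r (a, b) - mA r a * mB r b|) =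
        ENNReal.ofReal (ρ rnd) * ENNReal.ofReal |r (a, b) - mA r a * mB r b| :=
      fun rnd => ENNReal.ofReal_mul (hρ.1 rnd)
    rw [tsum_congr this, ENNReal.tsum_mul_right,
      ← ENNReal.ofReal_tsum_of_nonneg hρ.1 hρ.2.summable, hρ.2.tsum_eq,
      ENNReal.ofReal_one, one_mul]
  rw [tsum_congr hper]
  exact (ENNReal.tsum_prod'
    (f := fun q : SA × SB => ENNReal.ofReal |r q - mA r q.1 * mB r q.2|)).symm

end ennreal_side4

section assemble

open ENNReal

variable {SA SB R C : Type*} {r : SA × SB → ℝ} {ρ : R → ℝ} (f : SB × R → C)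

lemma summable_term (hr : IsPMF r) (hρ : IsPMF ρ) (b : SB) (a : SA) :
    Summable (fun rnd => mB r b * ρ rnd *
      |Nf r ρ f a (f (b, rnd)) / Df r ρ f (f (b, rnd)) - mA r a|) := by
  have hb : Summable (fun rnd => (mB r b * (1 + mA r a)) * ρ rnd) :=
    hρ.2.summable.mul_left _
  refine Summable.of_nonneg_of_le (fun rnd => ?_) (fun rnd => ?_) hb
  · exact mul_nonneg (mul_nonneg (mB_nonneg hr b) (hρ.1 rnd)) (abs_nonneg _)
  · have h1 : |Nf r ρ f a (f (b, rnd)) / Df r ρ f (f (b, rnd)) - mA r a| ≤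
        1 + mA r a := by
      have h2 := abs_sub (Nf r ρ f a (f (b, rnd)) / Df r ρ f (f (b, rnd))) (mA r a)
      rw [abs_of_nonneg (NDdiv_mem f hr hρ a _).1, abs_of_nonneg (mA_nonneg hr a)] at h2
      exact h2.trans (add_le_add_left (NDdiv_mem f hr hρ a _).2 _)
    calc mB r b * ρ rnd * |Nf r ρ f a (f (b, rnd)) / Df r ρ f (f (b, rnd)) - mA r a|
        ≤ mB r b * ρ rnd * (1 + mA r a) :=
          mul_le_mul_of_nonneg_left h1 (mul_nonneg (mB_nonneg hr b) (hρ.1 rnd))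
      _ = (mB r b * (1 + mA r a)) * ρ rnd := by ring

lemma main_ineq (hr : IsPMF r) (hρ : IsPMF ρ) :
    ∑' ba : SB × SA, ENNReal.ofReal
        |(∑' rnd, mB r ba.1 * ρ rnd *
            (Nf r ρ f ba.2 (f (ba.1, rnd)) / Df r ρ f (f (ba.1, rnd)))) -
          mB r ba.1 * mA r ba.2| ≤
      ∑' q : SA × SB, ENNReal.ofReal |r q - mA r q.1 * mB r q.2| := by
  calc ∑' ba : SB × SA, ENNReal.ofReal
        |(∑' rnd, mB r ba.1 * ρ rnd *
            (Nf r ρ f ba.2 (f (ba.1, rnd)) / Df r ρ f (f (ba.1, rnd)))) -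
          mB r ba.1 * mA r ba.2|
      ≤ ∑' ba : SB × SA, ENNReal.ofReal (∑' rnd, mB r ba.1 * ρ rnd *
          |Nf r ρ f ba.2 (f (ba.1, rnd)) / Df r ρ f (f (ba.1, rnd)) - mA r ba.2|) :=
        ENNReal.tsum_le_tsum fun ba =>
          ENNReal.ofReal_le_ofReal (step1 f hr hρ ba.1 ba.2)
    _ = ∑' ba : SB × SA, ∑' rnd, ENNReal.ofReal (mB r ba.1 * ρ rnd *
          |Nf r ρ f ba.2 (f (ba.1, rnd)) / Df r ρ f (f (ba.1, rnd)) - mA r ba.2|) :=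
        tsum_congr fun ba => ENNReal.ofReal_tsum_of_nonneg
          (fun rnd => mul_nonneg (mul_nonneg (mB_nonneg hr _) (hρ.1 rnd)) (abs_nonneg _))
          (summable_term f hr hρ ba.1 ba.2)
    _ = ∑' (b : SB) (a : SA) (rnd : R), ENNReal.ofReal (mB r b * ρ rnd *
          |Nf r ρ f a (f (b, rnd)) / Df r ρ f (f (b, rnd)) - mA r a|) :=
        ENNReal.tsum_prod'
    _ = ∑' (b : SB) (rnd : R) (a : SA), ENNReal.ofReal (mB r b * ρ rnd *
          |Nf r ρ f a (f (b, rnd)) / Df r ρ f (f (b, rnd)) - mA r a|) :=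
        tsum_congr fun b => ENNReal.tsum_comm
    _ = ∑' p : SB × R, ∑' a : SA, ENNReal.ofReal (mB r p.1 * ρ p.2 *
          |Nf r ρ f a (f p) / Df r ρ f (f p) - mA r a|) :=
        (ENNReal.tsum_prod' (f := fun p : SB × R => ∑' a : SA,
          ENNReal.ofReal (mB r p.1 * ρ p.2 *
            |Nf r ρ f a (f p) / Df r ρ f (f p) - mA r a|))).symm
    _ ≤ ∑' p : SB × R, (ENNReal.ofReal (mB r p.1 * ρ p.2) /
          ENNReal.ofReal (Df r ρ f (f p))) * Te r ρ f (f p) :=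
        ENNReal.tsum_le_tsum fun p => step2 f hr hρ p.1 p.2
    _ ≤ ∑' c : C, Te r ρ f c := step3 f hr hρ
    _ ≤ ∑' (c : C) (a : SA), ∑' p : SB × R, ({p' : SB × R | f p' = c}).indicator
          (fun p => ENNReal.ofReal (ρ p.2 * |r (a, p.1) - mA r a * mB r p.1|)) p :=
        ENNReal.tsum_le_tsum fun c => step4 f hr hρ c
    _ = ∑' q : SA × SB, ENNReal.ofReal |r q - mA r q.1 * mB r q.2| := step56 f hr hρ

end assemble


/-- Lemma `stillProd`, randomized leakage: let `r` be a joint pmf of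
`(a, b)` on `SA × SB`, `ε`-close to the product of its marginals `r₁ ⊗ r₂`, and let
`ρ` be a pmf of an independent random tape on `R`.  For a randomized leakage
`f : SB × R → C`, define `r'` on `SB × SA` by sampling `(b, rnd) ← r₂ ⊗ ρ`, setting
`c = f(b, rnd)`, and sampling `a'` from the distribution of the `a`-component of `r`
conditioned on `f` applied to the `b`-component (with an independent tape from `ρ`)
equalling `c`.  Then `SD(r', r₂ ⊗ r₁) ≤ ε`. -/
theorem sd_resample_given_randomized_leakage
    {SA SB R C : Type*} [Countable SA] [Countable SB] [Countable R]
    (r : SA × SB → ℝ) (hr : IsPMF r)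
    (ρ : R → ℝ) (hρ : IsPMF ρ) (ε : ℝ)
    (h : SD r (fun ab => (∑' b, r (ab.1, b)) * (∑' a, r (a, ab.2))) ≤ ε)
    (f : SB × R → C) :
    SD (fun ba : SB × SA =>
          ∑' rnd : R,
            (∑' a, r (a, ba.1)) * ρ rnd *
              ((∑' p, {p' : SB × R | f p' = f (ba.1, rnd)}.indicator
                  (fun p' => r (ba.2, p'.1) * ρ p'.2) p) /
               (∑' q, {q' : (SA × SB) × R | f (q'.1.2, q'.2) = f (ba.1, rnd)}.indicator
                  (fun q' => r q'.1 * ρ q'.2) q)))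
       (fun ba : SB × SA => (∑' a, r (a, ba.1)) * (∑' b, r (ba.2, b))) ≤ ε := by
  show SD (fun ba : SB × SA =>
      ∑' rnd : R, mB r ba.1 * ρ rnd *
        (Nf r ρ f ba.2 (f (ba.1, rnd)) / Df r ρ f (f (ba.1, rnd))))
    (fun ba : SB × SA => mB r ba.1 * mA r ba.2) ≤ ε
  have hprod : Summable (fun q : SA × SB => mA r q.1 * mB r q.2) :=
    (summable_mA hr).mul_of_nonneg (summable_mB hr)
      (fun a => mA_nonneg hr a) (fun b => mB_nonneg hr b)
  have hΔsum : Summable (fun q : SA × SB => |r q - mA r q.1 * mB r q.2|) :=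
    (hr.2.summable.sub hprod).abs
  have hΔnn : 0 ≤ ∑' q : SA × SB, |r q - mA r q.1 * mB r q.2| :=
    tsum_nonneg fun q => abs_nonneg _
  have hFD : (∑' ba : SB × SA,
      |(∑' rnd : R, mB r ba.1 * ρ rnd *
          (Nf r ρ f ba.2 (f (ba.1, rnd)) / Df r ρ f (f (ba.1, rnd)))) -
        mB r ba.1 * mA r ba.2|) ≤
      ∑' q : SA × SB, |r q - mA r q.1 * mB r q.2| := by
    by_cases hFsum : Summable (fun ba : SB × SA =>
        |(∑' rnd : R, mB r ba.1 * ρ rnd *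
            (Nf r ρ f ba.2 (f (ba.1, rnd)) / Df r ρ f (f (ba.1, rnd)))) -
          mB r ba.1 * mA r ba.2|)
    · have hmain := main_ineq f hr hρ
      rw [← ENNReal.ofReal_tsum_of_nonneg (fun ba => abs_nonneg _) hFsum,
        ← ENNReal.ofReal_tsum_of_nonneg (fun q => abs_nonneg _) hΔsum] at hmain
      exact (ENNReal.ofReal_le_ofReal_iff hΔnn).mp hmain
    · rw [tsum_eq_zero_of_not_summable hFsum]
      exact hΔnn
  have hSD : SD r (fun ab : SA × SB => mA r ab.1 * mB r ab.2) ≤ ε := h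
  refine le_trans ?_ hSD
  simp only [SD]
  exact mul_le_mul_of_nonneg_left hFD (by norm_num)
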